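/- Let d ≥ 2, let K ⊂ ℝ^d be a convex body and let δ ∈ (0, vol_d(K)). Let ξ, η ∈ S^{d−1} and t, u ∈ ℝ, and set A = K ∩ {p : p·ξ ≤ t} and B = K ∩ {p : p·η ≤ u}. Assume vol_d(A) = vol_d(B) = δ and vol_d(A △ B) > 0, where A △ B = (A \ B) ∪ (B \ A). Then the centroids satisfy ξ · C(B) > ξ · C(A). (Consequently, the surface of centers {C(K ∩ H⁻(ξ)) : ξ ∈ S^{d−1}} at level δ is supported at each point C(K ∩ H⁻(ξ)) by the hyperplane through it parallel to the cutting hyperplane H(ξ), touching only at that point — Dupin's theorem.) -/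

import Mathlib

open MeasureTheory Metric
open scoped InnerProductSpace ENNReal

/-- The centroid `(1/μ(A)) ∫_A p dμ(p)` of a set `A` with respect to a measure `μ`. -/
noncomputable def centroid {E : Type*} [NormedAddCommGroup E] [NormedSpace ℝ E]
    [MeasurableSpace E] (μ : Measure E) (A : Set E) : E :=
  ((μ A).toReal)⁻¹ • ∫ p in A, p ∂μ

theorem centroid_of_equal_volume_cut_strictly_above
    (d : ℕ) (hd : 2 ≤ d) (K : Set (EuclideanSpace ℝ (Fin d)))
    (hKcpt : IsCompact K) (hKconv : Convex ℝ K) (hKint : (interior K).Nonempty)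
    (δ : ℝ≥0∞) (hδ0 : 0 < δ) (hδK : δ < volume K)
    (ξ η : EuclideanSpace ℝ (Fin d)) (hξ : ‖ξ‖ = 1) (hη : ‖η‖ = 1)
    (t u : ℝ)
    (A B : Set (EuclideanSpace ℝ (Fin d)))
    (hA : A = K ∩ {p | ⟪p, ξ⟫_ℝ ≤ t})
    (hB : B = K ∩ {p | ⟪p, η⟫_ℝ ≤ u})
    (hvA : volume A = δ) (hvB : volume B = δ)
    (hsym : 0 < volume ((A \ B) ∪ (B \ A))) :
    ⟪ξ, centroid volume A⟫_ℝ < ⟪ξ, centroid volume B⟫_ℝ := by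
  have hKm : MeasurableSet K := hKcpt.isClosed.measurableSet
  have hAm : MeasurableSet A := by
    rw [hA]
    exact hKm.inter
      (measurableSet_le ((continuous_id.inner continuous_const)).measurable measurable_const)
  have hBm : MeasurableSet B := by
    rw [hB]
    exact hKm.inter
      (measurableSet_le ((continuous_id.inner continuous_const)).measurable measurable_const)
  have hδtop : δ ≠ ⊤ := (hδK.trans hKcpt.measure_lt_top).ne
  -- integrability
  have hintK : IntegrableOn (fun p : EuclideanSpace ℝ (Fin d) => p) K := by
    exact (continuous_id.continuousOn).integrableOn_compact hKcpt
  have hAK : A ⊆ K := by rw [hA]; exact Set.inter_subset_left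
  have hBK : B ⊆ K := by rw [hB]; exact Set.inter_subset_left
  have hintA : IntegrableOn (fun p : EuclideanSpace ℝ (Fin d) => p) A := hintK.mono_set hAK
  have hintB : IntegrableOn (fun p : EuclideanSpace ℝ (Fin d) => p) B := hintK.mono_set hBK
  set f : EuclideanSpace ℝ (Fin d) → ℝ := fun p => ⟪ξ, p⟫_ℝ with hf
  have hfK : IntegrableOn f K :=
    ((continuous_const.inner continuous_id).continuousOn).integrableOn_compact hKcpt
  have hfA : IntegrableOn f A := hfK.mono_set hAK
  have hfB : IntegrableOn f B := hfK.mono_set hBK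
  -- equal measures of the two differences
  have h1 : volume (A ∩ B) + volume (A \ B) = δ := by
    rw [measure_inter_add_diff A hBm, hvA]
  have h2 : volume (A ∩ B) + volume (B \ A) = δ := by
    rw [Set.inter_comm, measure_inter_add_diff B hAm, hvB]
  have hABfin : volume (A ∩ B) ≠ ⊤ := by
    refine ne_top_of_le_ne_top hδtop ?_
    rw [← hvA]; exact measure_mono Set.inter_subset_left
  have hm : volume (A \ B) = volume (B \ A) :=
    (ENNReal.add_right_inj hABfin).mp (h1.trans h2.symm)
  have hmBA : 0 < volume (B \ A) := by
    by_contra h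
    push_neg at h
    have h0 : volume (B \ A) = 0 := le_antisymm h zero_le
    have h0' : volume (A \ B) = 0 := by rw [hm, h0]
    have := measure_union_le (μ := volume) (A \ B) (B \ A)
    rw [h0, h0'] at this
    simp at this
    exact absurd this (by simpa using hsym.ne')
  have hBAfin : volume (B \ A) ≠ ⊤ := by
    refine ne_top_of_le_ne_top hδtop ?_
    rw [← hvB]; exact measure_mono Set.diff_subset
  have hmR : 0 < (volume (B \ A)).toReal := ENNReal.toReal_pos hmBA.ne' hBAfin
  -- pointwise bounds
  have hfle : ∀ p ∈ A \ B, f p ≤ t := by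
    intro p hp
    have hpA := hp.1
    rw [hA] at hpA
    have h' : ⟪p, ξ⟫_ℝ ≤ t := hpA.2
    show ⟪ξ, p⟫_ℝ ≤ t
    rw [real_inner_comm]; exact h'
  have hfgt : ∀ p ∈ B \ A, t < f p := by
    intro p hp
    have hpK : p ∈ K := hBK hp.1
    have hpA : p ∉ A := hp.2
    rw [hA] at hpA
    have h' : ¬ ⟪p, ξ⟫_ℝ ≤ t := fun h => hpA ⟨hpK, h⟩
    show t < ⟪ξ, p⟫_ℝ
    rw [real_inner_comm]; linarith
  -- the two integral bounds
  have hle : ∫ p in A \ B, f p ≤ (volume (A \ B)).toReal * t := by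
    have h1' := setIntegral_mono_on (hfA.mono_set Set.diff_subset)
      ((integrableOn_const_iff).mpr (Or.inr ((measure_mono (Set.diff_subset.trans hAK)).trans_lt
        hKcpt.measure_lt_top))) (hAm.diff hBm) hfle
    calc ∫ p in A \ B, f p ≤ ∫ _ in A \ B, t := h1'
      _ = (volume (A \ B)).toReal * t := by rw [setIntegral_const, smul_eq_mul]; rfl
  have hgt : (volume (B \ A)).toReal * t < ∫ p in B \ A, f p := by
    have hs : MeasurableSet (B \ A) := hBm.diff hAm
    have hct : IntegrableOn (fun _ => t) (B \ A) :=
      (integrableOn_const_iff).mpr (Or.inr ((measure_mono (Set.diff_subset.trans hBK)).trans_lt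
        hKcpt.measure_lt_top))
    have hfi : IntegrableOn (fun p => f p - t) (B \ A) :=
      (hfB.mono_set Set.diff_subset).sub hct
    have hpos : 0 < ∫ p in B \ A, (f p - t) := by
      refine (setIntegral_pos_iff_support_of_nonneg_ae ?_ hfi).mpr ?_
      · refine (ae_restrict_iff' hs).mpr (ae_of_all _ fun p hp => ?_)
        have := hfgt p hp
        simp only [Pi.zero_apply]
        linarith
      · refine hmBA.trans_le (measure_mono ?_)
        intro p hp
        refine ⟨?_, hp⟩
        have := hfgt p hp
        simp only [Function.mem_support]
        intro h; linarith [sub_eq_zero.mp h]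
    have heq : ∫ p in B \ A, (f p - t)
        = (∫ p in B \ A, f p) - (volume (B \ A)).toReal * t := by
      rw [integral_sub (hfB.mono_set Set.diff_subset) hct, setIntegral_const, smul_eq_mul]; rfl
    rw [heq] at hpos
    linarith
  -- combine
  have hintlt : ∫ p in A, f p < ∫ p in B, f p := by
    have hsplitA : (∫ p in A ∩ B, f p) + (∫ p in A \ B, f p) = ∫ p in A, f p :=
      integral_inter_add_diff hBm hfA
    have hsplitB : (∫ p in A ∩ B, f p) + (∫ p in B \ A, f p) = ∫ p in B, f p := by
      rw [Set.inter_comm]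
      exact integral_inter_add_diff hAm hfB
    have hmm : (volume (A \ B)).toReal = (volume (B \ A)).toReal := by rw [hm]
    rw [← hsplitA, ← hsplitB]
    have hlt : (∫ p in A \ B, f p) < ∫ p in B \ A, f p := by
      calc ∫ p in A \ B, f p ≤ (volume (A \ B)).toReal * t := hle
        _ = (volume (B \ A)).toReal * t := by rw [hmm]
        _ < ∫ p in B \ A, f p := hgt
    linarith
  -- relate to centroids
  have hcA : ⟪ξ, centroid volume A⟫_ℝ = (δ.toReal)⁻¹ * ∫ p in A, f p := by
    rw [centroid, real_inner_smul_right, hvA, integral_inner hintA]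
  have hcB : ⟪ξ, centroid volume B⟫_ℝ = (δ.toReal)⁻¹ * ∫ p in B, f p := by
    rw [centroid, real_inner_smul_right, hvB, integral_inner hintB]
  rw [hcA, hcB]
  have hδR : 0 < δ.toReal := ENNReal.toReal_pos hδ0.ne' hδtop
  exact mul_lt_mul_of_pos_left hintlt (inv_pos.mpr hδR)
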